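/- In the unrolled dynamic Bayesian network, under the Markov and faithfulness assumptions, a state component s_{i,t} has a directed path to some future reward r_{t+τ} (τ ≥ 1) if and only if s_{i,t} is conditionally dependent on a_t given the cumulative future reward R_{t+1} and any subset of the other time-t state components. -/

import Mathlib

/-- Nodes of the unrolled DBN, augmented with the cumulative future reward
`R_t = Σ_{u ≥ t} γ^{u-t} r_u`, a common child of all rewards `r_u`, `u ≥ t`. -/
inductive RLNode (ι : Type*) where
  | state (i : ι) (t : ℕ)
  | action (t : ℕ)
  | reward (t : ℕ)
  | cum (t : ℕ)

/-- Edges of the unrolled DBN with the cumulative reward node: the structural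
masks `Sedge`, `Aedge`, `Redge` as before (edges only from `s_{i,t}` to
`s_{j,t+1}`, from `a_t` to `s_{j,t+1}` and `r_{t+1}`, from `s_{i,t}` to
`r_{t+1}`), and `r_u → R_v` whenever `v ≤ u` (so `R_{t+1}` is a collider child
of all future rewards). -/
def RLEdge {ι : Type*} (Sedge : ι → ι → Prop) (Aedge Redge : ι → Prop) :
    RLNode ι → RLNode ι → Prop
  | RLNode.state i t, RLNode.state j t' => t' = t + 1 ∧ Sedge i j
  | RLNode.state i t, RLNode.reward t' => t' = t + 1 ∧ Redge i
  | RLNode.action t, RLNode.state j t' => t' = t + 1 ∧ Aedge j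
  | RLNode.action t, RLNode.reward t' => t' = t + 1
  | RLNode.reward u, RLNode.cum v => v ≤ u
  | _, _ => False

def Adjacent {V : Type*} (E : V → V → Prop) (a b : V) : Prop := E a b ∨ E b a

def IsWalkBetween {V : Type*} (E : V → V → Prop) (p : List V) (x y : V) : Prop :=
  List.Chain' (Adjacent E) p ∧ p.head? = some x ∧ p.getLast? = some y

def Descendant {V : Type*} (E : V → V → Prop) (a b : V) : Prop :=
  Relation.ReflTransGen E a b

/-- A path blocked by `Z`: a non-collider in `Z`, or a collider none of whose
descendants (including itself) is in `Z`. -/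
def Blocked {V : Type*} (E : V → V → Prop) (Z : Set V) (p : List V) : Prop :=
  ∃ (l₁ l₂ : List V) (i m j : V), p = l₁ ++ i :: m :: j :: l₂ ∧
    ((¬(E i m ∧ E j m) ∧ m ∈ Z) ∨
      (E i m ∧ E j m ∧ ∀ w, Descendant E m w → w ∉ Z))

/-- Pairwise d-separation of `x` and `y` given `Z`. -/
def DSep {V : Type*} (E : V → V → Prop) (x y : V) (Z : Set V) : Prop :=
  ∀ p, IsWalkBetween E p x y → Blocked E Z p

namespace RLaux

lemma chain'_getElem {α : Type*} {R : α → α → Prop} {l : List α} (h : List.Chain' R l)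
    {k : ℕ} (hk : k + 1 < l.length) : R (l[k]'(by omega)) (l[k+1]'hk) := by
  have := List.isChain_iff_getElem.1 h k (by omega)
  simpa [List.get_eq_getElem] using this

lemma triple_decomp {α : Type*} (p : List α) (k : ℕ) (h : k + 2 < p.length) :
    ∃ l₁ l₂, p = l₁ ++ (p[k]'(by omega)) :: (p[k+1]'(by omega)) :: (p[k+2]'h) :: l₂ := by
  refine ⟨p.take k, p.drop (k+3), ?_⟩
  conv_lhs => rw [← List.take_append_drop k p]
  rw [List.drop_eq_getElem_cons (show k < p.length by omega),
      List.drop_eq_getElem_cons (show k+1 < p.length by omega),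
      List.drop_eq_getElem_cons (show k+2 < p.length by omega)]

lemma decomp_getElem {α : Type*} {p l₁ l₂ : List α} {a m b : α}
    (hp : p = l₁ ++ a :: m :: b :: l₂) :
    ∃ (k : ℕ) (h : k + 2 < p.length),
      (p[k]'(by omega)) = a ∧ (p[k+1]'(by omega)) = m ∧ (p[k+2]'h) = b := by
  subst hp
  have hlen : (l₁ ++ a :: m :: b :: l₂).length = l₁.length + (l₂.length + 3) := by
    simp
  refine ⟨l₁.length, by omega, ?_, ?_, ?_⟩
  · rw [List.getElem_append_right (le_refl _)]; simp
  · rw [List.getElem_append_right (by omega)]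
    simp [Nat.add_sub_cancel_left]
  · rw [List.getElem_append_right (by omega)]
    have : l₁.length + 2 - l₁.length = 2 := by omega
    simp [this]

lemma transGen_list {α : Type*} {E : α → α → Prop} {x y : α} (h : Relation.TransGen E x y) :
    ∃ q : List α, List.Chain' E q ∧ q.head? = some x ∧ q.getLast? = some y ∧
      2 ≤ q.length ∧
      ∀ m ∈ q, Relation.ReflTransGen E x m ∧ Relation.ReflTransGen E m y := by
  induction h using Relation.TransGen.head_induction_on with
  | single h =>
      rename_i a
      refine ⟨[a, y], by simp [List.Chain', List.isChain_cons_cons, h], rfl, by simp, by simp, ?_⟩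
      intro m hm
      rcases List.mem_pair.1 hm with rfl | rfl
      · exact ⟨Relation.ReflTransGen.refl, Relation.ReflTransGen.single h⟩
      · exact ⟨Relation.ReflTransGen.single h, Relation.ReflTransGen.refl⟩
  | head h₁ h₂ ih =>
      rename_i a c
      obtain ⟨q, hch, hh, hl, hlen, hmem⟩ := ih
      obtain ⟨q', rfl⟩ := List.head?_eq_some_iff.1 hh
      refine ⟨a :: c :: q', ?_, rfl, ?_, by simp, ?_⟩
      · exact List.isChain_cons_cons.2 ⟨h₁, hch⟩
      · rw [List.getLast?_cons_cons]; exact hl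
      · intro m hm
        rcases List.mem_cons.1 hm with rfl | hm
        · exact ⟨Relation.ReflTransGen.refl, Relation.TransGen.to_reflTransGen (.head h₁ h₂)⟩
        · obtain ⟨h1, h2⟩ := hmem m hm
          exact ⟨h1.head h₁, h2⟩

variable {ι : Type*} {Sedge : ι → ι → Prop} {Aedge Redge : ι → Prop}

local notation "E" => RLEdge Sedge Aedge Redge

def tmN : RLNode ι → ℕ
  | .state _ t => t
  | .action t => t
  | .reward t => t
  | .cum t => t

lemma edge_cases {a b : RLNode ι} (h : E a b) :
    (∃ u v, a = RLNode.reward u ∧ b = RLNode.cum v ∧ v ≤ u) ∨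
      ((∀ v, b ≠ RLNode.cum v) ∧ tmN b = tmN a + 1) := by
  cases a <;> cases b <;> simp_all [RLEdge, tmN]

lemma no_into_action {a : RLNode ι} {u : ℕ} (h : E a (RLNode.action u)) : False := by
  cases a <;> simp_all [RLEdge]

lemma cum_no_out {v : ℕ} {b : RLNode ι} (h : E (RLNode.cum v) b) : False := by
  cases b <;> simp_all [RLEdge]

lemma into_cum {a : RLNode ι} {v : ℕ} (h : E a (RLNode.cum v)) :
    ∃ u, a = RLNode.reward u ∧ v ≤ u := by
  cases a <;> simp_all [RLEdge]

lemma reward_out {u : ℕ} {b : RLNode ι} (h : E (RLNode.reward u) b) :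
    ∃ v, b = RLNode.cum v ∧ v ≤ u := by
  cases b <;> simp_all [RLEdge]

lemma not_cum_of_out {a b : RLNode ι} (h : E a b) : ∀ v, a ≠ RLNode.cum v := by
  rintro v rfl; exact cum_no_out h

lemma antisym {a b : RLNode ι} (h : E a b) (h' : E b a) : False := by
  rcases edge_cases h with ⟨u, v, rfl, rfl, _⟩ | ⟨hb, ht⟩
  · exact cum_no_out h'
  rcases edge_cases h' with ⟨u', v', hb', ha', _⟩ | ⟨ha, ht'⟩
  · subst ha'; exact cum_no_out h
  omega

lemma cum_rtg {v : ℕ} {y : RLNode ι} (h : Relation.ReflTransGen E (RLNode.cum v) y) :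
    y = RLNode.cum v := by
  rcases h.cases_head with h | ⟨c, hc, _⟩
  · exact h.symm
  · exact (cum_no_out hc).elim

lemma mono {x y : RLNode ι} (h : Relation.ReflTransGen E x y)
    (hy : ∀ v, y ≠ RLNode.cum v) : x = y ∨ tmN x < tmN y := by
  induction h with
  | refl => exact Or.inl rfl
  | tail hxb hbc ih =>
      rcases edge_cases hbc with ⟨u, v, rfl, rfl, _⟩ | ⟨hnc, ht⟩
      · exact absurd rfl (hy v)
      · rcases ih (not_cum_of_out hbc) with rfl | hlt <;> omega

lemma rtg_cum_src {x : RLNode ι} {v : ℕ}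
    (h : Relation.ReflTransGen E x (RLNode.cum v)) :
    x = RLNode.cum v ∨ ∃ u, v ≤ u ∧ Relation.ReflTransGen E x (RLNode.reward u) := by
  rcases Relation.reflTransGen_iff_eq_or_transGen.1 h with h | h
  · exact Or.inl h.symm
  · rcases Relation.TransGen.tail'_iff.1 h with ⟨b, hxb, hbc⟩
    rcases into_cum hbc with ⟨u, rfl, hu⟩
    exact Or.inr ⟨u, hu, hxb⟩

lemma forward {i : ι} {t τ : ℕ} (hτ : 1 ≤ τ)
    (hp : Relation.TransGen E (RLNode.state i t) (RLNode.reward (t+τ)))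
    {S : Set (RLNode ι)} (hS : S ⊆ {n | ∃ j, j ≠ i ∧ n = RLNode.state j t}) :
    ¬ DSep E (RLNode.state i t) (RLNode.action t) (insert (RLNode.cum (t+1)) S) := by
  intro hD
  obtain ⟨q, hch, hh, hl, hlen, hmem⟩ := transGen_list hp
  have notZq : ∀ z ∈ q, z ∉ insert (RLNode.cum (t+1)) S := by
    intro z hz hzZ
    obtain ⟨hxz, hzy⟩ := hmem z hz
    rcases Set.mem_insert_iff.1 hzZ with rfl | hzS
    · have := cum_rtg hzy; simp at this
    · obtain ⟨j, hj, rfl⟩ := hS hzS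
      rcases mono hxz (by simp) with heq | hlt
      · simp_all
      · simp [tmN] at hlt
  set T := q ++ [RLNode.cum (t+1), RLNode.reward (t+1), RLNode.action t] with hT
  obtain ⟨q', hq'⟩ := List.head?_eq_some_iff.1 hh
  have hwalk : IsWalkBetween E T (RLNode.state i t) (RLNode.action t) := by
    refine ⟨?_, ?_, ?_⟩
    · rw [hT, List.Chain', List.isChain_append]
      refine ⟨hch.imp (fun _ _ h => Or.inl h), ?_, ?_⟩
      · refine List.isChain_cons_cons.2 ⟨Or.inr ?_, List.isChain_cons_cons.2 ⟨Or.inr ?_,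
          List.isChain_singleton _⟩⟩
        · show E (RLNode.reward (t+1)) (RLNode.cum (t+1)); simp [RLEdge]
        · show E (RLNode.action t) (RLNode.reward (t+1)); simp [RLEdge]
      · intro a ha b hb
        rw [hl] at ha
        simp only [Option.mem_some_iff] at ha hb
        subst ha
        simp only [List.head?_cons] at hb
        cases hb
        exact Or.inl (show E (RLNode.reward (t+τ)) (RLNode.cum (t+1)) by
          simp [RLEdge]; omega)
    · rw [hT, hq']; rfl
    · rw [hT, show q ++ [RLNode.cum (t+1), RLNode.reward (t+1), RLNode.action t]
          = (q ++ [RLNode.cum (t+1), RLNode.reward (t+1)]) ++ [RLNode.action t] by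
            simp]
      exact List.getLast?_concat
  obtain ⟨l₁, l₂, a, m, b, hTeq, hcond⟩ := hD T hwalk
  obtain ⟨k, hk2, ha, hm, hb⟩ := decomp_getElem hTeq
  have hTlen : T.length = q.length + 3 := by simp [hT]
  have hqL : q[q.length - 1]'(by omega) = RLNode.reward (t+τ) := by
    have h1 : q[q.length - 1]? = some (RLNode.reward (t+τ)) := by
      rw [← List.getLast?_eq_getElem?, hl]
    rwa [List.getElem?_eq_getElem (show q.length - 1 < q.length by omega),
      Option.some_inj] at h1
  -- getElem? versions
  have ha? : T[k]? = some a := by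
    rw [List.getElem?_eq_getElem (show k < T.length by omega), ha]
  have hm? : T[k+1]? = some m := by
    rw [List.getElem?_eq_getElem (show k+1 < T.length by omega), hm]
  have hb? : T[k+2]? = some b := by
    rw [List.getElem?_eq_getElem (show k+2 < T.length by omega), hb]
  have hcase : k + 2 ≤ q.length ∨ k + 1 = q.length ∨ k = q.length := by omega
  rcases hcase with hc | hc | hc
  · -- m inside q
    have hmq : m = q[k+1]'(by omega) := by
      rw [hT] at hm?
      rw [List.getElem?_append_left (by omega),
        List.getElem?_eq_getElem (show k+1 < q.length by omega), Option.some_inj] at hm?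
      exact hm?.symm
    have hmmem : m ∈ q := by rw [hmq]; exact List.getElem_mem _
    have hmb : E m b := by
      rcases Nat.lt_or_ge (k+2) q.length with h2 | h2
      · have hbq : b = q[k+2]'h2 := by
          rw [hT] at hb?
          rw [List.getElem?_append_left (by omega),
            List.getElem?_eq_getElem h2, Option.some_inj] at hb?
          exact hb?.symm
        rw [hmq, hbq]
        exact chain'_getElem hch (by omega)
      · have h2' : k + 2 = q.length := by omega
        have hbq : b = RLNode.cum (t+1) := by
          rw [hT] at hb?
          rw [List.getElem?_append_right (by omega), h2'] at hb?
          simp at hb?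
          exact hb?.symm
        have hmr : m = RLNode.reward (t+τ) := by
          rw [hmq]
          have : k + 1 = q.length - 1 := by omega
          simp only [this]
          exact hqL
        rw [hmr, hbq]
        show E (RLNode.reward (t+τ)) (RLNode.cum (t+1))
        simp [RLEdge]; omega
    rcases hcond with ⟨hnc, hmZ⟩ | ⟨_, hbm, _⟩
    · exact notZq m hmmem hmZ
    · exact antisym hmb hbm
  · -- m = cum (t+1)
    have hma : m = RLNode.cum (t+1) := by
      rw [hT] at hm?
      rw [hc, List.getElem?_append_right (le_refl _)] at hm?
      simp at hm?
      exact hm?.symm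
    have haq : a = RLNode.reward (t+τ) := by
      rw [hT] at ha?
      rw [List.getElem?_append_left (by omega),
        List.getElem?_eq_getElem (show k < q.length by omega), Option.some_inj] at ha?
      rw [← ha?]
      have : k = q.length - 1 := by omega
      simp only [this]
      exact hqL
    have hbq : b = RLNode.reward (t+1) := by
      rw [hT] at hb?
      rw [show k + 2 = q.length + 1 by omega,
        List.getElem?_append_right (by omega)] at hb?
      simp at hb?
      exact hb?.symm
    rcases hcond with ⟨hnc, _⟩ | ⟨_, _, hall⟩
    · refine hnc ⟨?_, ?_⟩
      · rw [haq, hma]; show E (RLNode.reward (t+τ)) (RLNode.cum (t+1))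
        simp [RLEdge]; omega
      · rw [hbq, hma]; show E (RLNode.reward (t+1)) (RLNode.cum (t+1))
        simp [RLEdge]
    · exact hall m Relation.ReflTransGen.refl (by rw [hma]; exact Set.mem_insert _ _)
  · -- m = reward (t+1), a = cum (t+1)
    have hma : m = RLNode.reward (t+1) := by
      rw [hT] at hm?
      rw [show k + 1 = q.length + 1 by omega,
        List.getElem?_append_right (by omega)] at hm?
      simp at hm?
      exact hm?.symm
    have haq : a = RLNode.cum (t+1) := by
      rw [hT] at ha?
      rw [hc, List.getElem?_append_right (le_refl _)] at ha?
      simp at ha?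
      exact ha?.symm
    rcases hcond with ⟨_, hmZ⟩ | ⟨ham, _, _⟩
    · rcases Set.mem_insert_iff.1 hmZ with h | h
      · rw [hma] at h; simp at h
      · obtain ⟨j, hj, hjj⟩ := hS h
        rw [hma] at hjj; simp at hjj
    · rw [haq] at ham; exact cum_no_out ham

lemma backward {i : ι} {t : ℕ}
    (hng : ∀ u, ¬ Relation.TransGen E (RLNode.state i t) (RLNode.reward u)) :
    DSep E (RLNode.state i t) (RLNode.action t)
      (insert (RLNode.cum (t+1)) {n | ∃ j, j ≠ i ∧ n = RLNode.state j t}) := by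
  set Z : Set (RLNode ι) :=
    insert (RLNode.cum (t+1)) {n | ∃ j, j ≠ i ∧ n = RLNode.state j t} with hZdef
  have notZdesc : ∀ w, Relation.ReflTransGen E (RLNode.state i t) w → w ∉ Z := by
    intro w hw hwZ
    rcases Set.mem_insert_iff.1 hwZ with rfl | hwS
    · rcases rtg_cum_src hw with h | ⟨u, hu, hru⟩
      · simp at h
      · rcases Relation.reflTransGen_iff_eq_or_transGen.1 hru with h | h
        · simp at h
        · exact hng u h
    · obtain ⟨j, hj, rfl⟩ := hwS
      rcases mono hw (by simp) with h | h
      · simp_all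
      · simp [tmN] at h
  intro p hwalk
  by_contra hB
  obtain ⟨hch, hh, hl⟩ := hwalk
  have TC : ∀ (k : ℕ) (h : k + 2 < p.length),
      ¬((¬(E (p[k]'(by omega)) (p[k+1]'(by omega)) ∧
            E (p[k+2]'h) (p[k+1]'(by omega))) ∧ (p[k+1]'(by omega)) ∈ Z) ∨
        (E (p[k]'(by omega)) (p[k+1]'(by omega)) ∧ E (p[k+2]'h) (p[k+1]'(by omega)) ∧
          ∀ w, Relation.ReflTransGen E (p[k+1]'(by omega)) w → w ∉ Z)) := by
    intro k h hc
    obtain ⟨l₁, l₂, hdec⟩ := triple_decomp p k h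
    exact hB ⟨l₁, l₂, _, _, _, hdec, hc⟩
  obtain ⟨p', hp'⟩ := List.head?_eq_some_iff.1 hh
  have hplen0 : 0 < p.length := by rw [hp']; simp
  have h0 : p[0]'hplen0 = RLNode.state i t := by simp [hp']
  have hlen2 : 2 ≤ p.length := by
    rcases p' with _ | ⟨z, p''⟩
    · rw [hp'] at hl; simp at hl
    · rw [hp']; simp
  have hlastlt : p.length - 1 < p.length := by omega
  have hplast : p[p.length - 1]'hlastlt = RLNode.action t := by
    have h1 : p[p.length - 1]? = some (RLNode.action t) := by
      rw [← List.getLast?_eq_getElem?, hl]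
    rwa [List.getElem?_eq_getElem hlastlt, Option.some_inj] at h1
  have Q : ∀ (j : ℕ) (hj : j + 1 < p.length),
      (E (p[j+1]'hj) (p[j]'(by omega)) ∧ tmN (p[j+1]'hj) < t) ∨
      (E (p[j]'(by omega)) (p[j+1]'hj) ∧
        (tmN (p[j+1]'hj) ≤ t ∨
          Relation.ReflTransGen E (RLNode.state i t) (p[j+1]'hj))) := by
    intro j
    induction j with
    | zero =>
      intro hj
      have hadj := chain'_getElem hch hj
      rw [h0] at hadj
      rw [h0]
      rcases hadj with hF | hBk
      · exact Or.inr ⟨hF, Or.inr (Relation.ReflTransGen.single hF)⟩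
      · refine Or.inl ⟨hBk, ?_⟩
        rcases edge_cases hBk with ⟨u, v, _, hcc, _⟩ | ⟨_, ht'⟩
        · simp at hcc
        · have hst : tmN (RLNode.state i t) = t := rfl
          omega
    | succ j ih =>
      intro hj
      have hQp := ih (by omega)
      have hadj := chain'_getElem hch (show (j+1) + 1 < p.length from hj)
      have htc := TC j hj
      have TC1 : ¬(E (p[j]'(by omega)) (p[j+1]'(by omega)) ∧
          E (p[j+2]'hj) (p[j+1]'(by omega))) → (p[j+1]'(by omega)) ∉ Z :=
        fun hnc hmZ => htc (Or.inl ⟨hnc, hmZ⟩)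
      have TC2 : (E (p[j]'(by omega)) (p[j+1]'(by omega)) ∧
          E (p[j+2]'hj) (p[j+1]'(by omega))) →
          ∃ w, Relation.ReflTransGen E (p[j+1]'(by omega)) w ∧ w ∈ Z := by
        intro hcol
        by_contra hno
        push_neg at hno
        exact htc (Or.inr ⟨hcol.1, hcol.2, fun w hw => hno w hw⟩)
      rcases hadj with hmb | hbm
      · -- forward step out of m
        rcases hQp with ⟨hma, hmt⟩ | ⟨ham, hrest⟩
        · refine Or.inr ⟨hmb, Or.inl ?_⟩
          rcases edge_cases hmb with ⟨u, v, hmr, hbc, hvu⟩ | ⟨_, ht'⟩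
          · rw [hbc]
            rw [hmr] at hmt
            simp [tmN] at hmt ⊢
            omega
          · omega
        · have hnc : ¬(E (p[j]'(by omega)) (p[j+1]'(by omega)) ∧
              E (p[j+2]'hj) (p[j+1]'(by omega))) := fun hc => antisym hmb hc.2
          have hmZ := TC1 hnc
          refine Or.inr ⟨hmb, ?_⟩
          rcases hrest with hle | hdesc
          · rcases edge_cases hmb with ⟨u, v, hmr, hbc, hvu⟩ | ⟨hbnc, ht'⟩
            · left
              rw [hbc]
              rw [hmr] at hle
              simp [tmN] at hle ⊢
              omega
            · rcases Nat.lt_or_ge (tmN (p[j+1]'(by omega))) t with hlt | hge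
              · left; omega
              · have hmt : tmN (p[j+1]'(by omega)) = t := by omega
                cases hmc : (p[j+1]'(by omega)) with
                | state l u =>
                  have hut : u = t := by rw [hmc] at hmt; simpa [tmN] using hmt
                  have hli : l = i := by
                    by_contra hne
                    refine hmZ ?_
                    rw [hmc, hut, hZdef]
                    exact Set.mem_insert_iff.2 (Or.inr ⟨l, hne, rfl⟩)
                  right
                  rw [hmc, hut, hli] at hmb
                  exact Relation.ReflTransGen.single hmb
                | action u =>
                  rw [hmc] at ham
                  exact (no_into_action ham).elim
                | reward u =>
                  rw [hmc] at hmb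
                  obtain ⟨v, hv, _⟩ := reward_out hmb
                  exact (hbnc v hv).elim
                | cum v =>
                  rw [hmc] at hmb
                  exact (cum_no_out hmb).elim
          · exact Or.inr (hdesc.tail hmb)
      · -- backward step into m
        rcases hQp with ⟨hma, hmt⟩ | ⟨ham, hrest⟩
        · refine Or.inl ⟨hbm, ?_⟩
          rcases edge_cases hbm with ⟨u, v, hbr, hmc, hvu⟩ | ⟨_, ht'⟩
          · rw [hmc] at hma
            exact (cum_no_out hma).elim
          · omega
        · obtain ⟨w, hw, hwZ⟩ := TC2 ⟨ham, hbm⟩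
          rcases hrest with hle | hdesc
          · refine Or.inl ⟨hbm, ?_⟩
            rcases edge_cases hbm with ⟨u, v, hbr, hmc, hvu⟩ | ⟨_, ht'⟩
            · rw [hmc] at hw hle
              have hwc := cum_rtg hw
              rw [hwc] at hwZ
              rcases Set.mem_insert_iff.1 hwZ with h | h
              · simp [tmN] at hle
                have : v = t + 1 := by
                  injection h
                omega
              · obtain ⟨j', _, hj'⟩ := h
                simp at hj'
            · omega
          · exact ((notZdesc w (hdesc.trans hw)) hwZ).elim
  have hfin := Q (p.length - 2) (by omega)
  have e1 : p.length - 2 + 1 = p.length - 1 := by omega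
  simp only [e1] at hfin
  rw [hplast] at hfin
  rcases hfin with ⟨_, hlt⟩ | ⟨hEa, _⟩
  · simp [tmN] at hlt
  · exact no_into_action hEa

end RLaux

/-- In the unrolled DBN, under the Markov and faithfulness
assumptions (conditional independence coincides with d-separation), a state
component `s_{i,t}` has a directed path to some future reward `r_{t+τ}`
(`τ ≥ 1`) if and only if `s_{i,t}` is conditionally dependent on `a_t` given
the cumulative future reward `R_{t+1}` and any subset of the other time-`t`
state components. -/
theorem directed_path_to_reward_iff_cond_dependent_on_action
    {ι : Type*} (Sedge : ι → ι → Prop) (Aedge Redge : ι → Prop)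
    (CI : RLNode ι → RLNode ι → Set (RLNode ι) → Prop)
    (markov_faithful : ∀ x y Z, CI x y Z ↔ DSep (RLEdge Sedge Aedge Redge) x y Z)
    (i : ι) (t : ℕ) :
    (∃ τ : ℕ, 1 ≤ τ ∧
        Relation.TransGen (RLEdge Sedge Aedge Redge)
          (RLNode.state i t) (RLNode.reward (t + τ))) ↔
      (∀ S : Set (RLNode ι), S ⊆ {n | ∃ j, j ≠ i ∧ n = RLNode.state j t} →
        ¬ CI (RLNode.state i t) (RLNode.action t)
          (insert (RLNode.cum (t + 1)) S)) := by
  constructor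
  · rintro ⟨τ, hτ, hp⟩ S hS hCI
    rw [markov_faithful] at hCI
    exact RLaux.forward hτ hp hS hCI
  · intro hR
    by_contra hL
    push_neg at hL
    have hng : ∀ u, ¬ Relation.TransGen (RLEdge Sedge Aedge Redge)
        (RLNode.state i t) (RLNode.reward u) := by
      intro u hu
      have hm := RLaux.mono hu.to_reflTransGen (by simp)
      rcases hm with h | h
      · simp at h
      · have htm : RLaux.tmN (RLNode.state i t (ι := ι)) = t := rfl
        have htm2 : RLaux.tmN (RLNode.reward u (ι := ι)) = u := rfl
        have heq : u = t + (u - t) := by omega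
        exact hL (u - t) (by omega) (by rw [← heq]; exact hu)
    exact hR _ (fun x hx => hx) ((markov_faithful _ _ _).2 (RLaux.backward hng))
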